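/- Let α, β be purely imaginary quaternions with ‖α‖ = ‖β‖ = 1. Then for every real t, exp(tα) · exp(-tβ) = (1/2)(1 - αβ) + cos(2t) · (1/2)(1 + αβ) + sin(2t) · (1/2)(α - β). -/

import Mathlib

open Quaternion

lemma real_coe_eq_smul_one (r : ℝ) : (r : ℍ[ℝ]) = r • (1 : ℍ[ℝ]) := by
  rw [← Quaternion.algebraMap_def, Algebra.algebraMap_eq_smul_one]

lemma exp_smul_unit_im (α : ℍ[ℝ]) (hα : α.re = 0) (hα1 : ‖α‖ = 1) (t : ℝ) :
    NormedSpace.exp (t • α) = Real.cos t • (1 : ℍ[ℝ]) + Real.sin t • α := by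
  have hre : (t • α).re = 0 := by simp [hα]
  rw [Quaternion.exp_of_re_eq_zero _ hre]
  have hn : ‖t • α‖ = |t| := by simp [norm_smul, hα1]
  rcases eq_or_ne t 0 with h0 | h0
  · simp [h0, real_coe_eq_smul_one]
  have hs : Real.sin |t| / |t| * t = Real.sin t := by
    rcases lt_or_gt_of_ne h0 with ht | ht
    · rw [abs_of_neg ht, Real.sin_neg]
      field_simp
    · rw [abs_of_pos ht]
      field_simp
  have hc : Real.cos |t| = Real.cos t := by
    rcases abs_choice t with h | h <;> rw [h] <;> simp
  rw [hn, smul_smul, hs, hc, real_coe_eq_smul_one]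

/-- For purely imaginary unit quaternions `α, β`, the curve `t ↦ exp(tα)·exp(-tβ)` is
`(1/2)(1 - αβ) + cos(2t)·(1/2)(1 + αβ) + sin(2t)·(1/2)(α - β)`. -/
theorem exp_mul_exp_neg_eq_circle (α β : ℍ[ℝ])
    (hα : α.re = 0) (hβ : β.re = 0) (hα1 : ‖α‖ = 1) (hβ1 : ‖β‖ = 1) (t : ℝ) :
    NormedSpace.exp (t • α) * NormedSpace.exp (-(t • β)) =
      (1/2 : ℝ) • (1 - α * β)
      + Real.cos (2 * t) • ((1/2 : ℝ) • (1 + α * β))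
      + Real.sin (2 * t) • ((1/2 : ℝ) • (α - β)) := by
  rw [show -(t • β) = (-t) • β from by simp, exp_smul_unit_im α hα hα1 t,
    exp_smul_unit_im β hβ hβ1 (-t), Real.cos_neg, Real.sin_neg,
    Real.cos_two_mul, Real.sin_two_mul, add_mul, mul_add, mul_add,
    smul_mul_smul_comm, smul_mul_smul_comm, smul_mul_smul_comm, smul_mul_smul_comm]
  simp only [one_mul, mul_one]
  have h := Real.sin_sq_add_cos_sq t
  match_scalars <;> linarith [h]
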